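/- There is a k-algebra anti-automorphism θ of NC_A(n,d) fixing each generator T_i, and θ fixes each of the primitive elements T_{w'_∘} T_n^k T_{n-1} ⋯ T_1 for 1 ≤ k ≤ d-1. -/

import Mathlib

/-- Relations of the generalized nil-Coxeter algebra `NC_A(n,d)` on generators
`T_1, …, T_n` (0-indexed by `Fin n`): type-`A_n` braid relations,
`T_i^2 = 0` for `i < n`, and `T_n^d = 0`. -/
inductive NCRel (k : Type) [CommRing k] (n d : ℕ) :
    FreeAlgebra k (Fin n) → FreeAlgebra k (Fin n) → Prop
  | braid (i j : Fin n) (h : (i : ℕ) + 1 = j) :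
      NCRel k n d (FreeAlgebra.ι k i * FreeAlgebra.ι k j * FreeAlgebra.ι k i)
        (FreeAlgebra.ι k j * FreeAlgebra.ι k i * FreeAlgebra.ι k j)
  | comm (i j : Fin n) (h : (i : ℕ) + 1 < j) :
      NCRel k n d (FreeAlgebra.ι k i * FreeAlgebra.ι k j)
        (FreeAlgebra.ι k j * FreeAlgebra.ι k i)
  | sq (i : Fin n) (h : (i : ℕ) + 1 < n) : NCRel k n d (FreeAlgebra.ι k i ^ 2) 0
  | last (i : Fin n) (h : (i : ℕ) + 1 = n) : NCRel k n d (FreeAlgebra.ι k i ^ d) 0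

/-- The generalized nil-Coxeter algebra `NC_A(n,d)`. -/
abbrev NCA (k : Type) [CommRing k] (n d : ℕ) := RingQuot (NCRel k n d)

/-- The generator `T_j` (1-indexed, for `1 ≤ j ≤ n`) of `NC_A(n,d)`. -/
noncomputable def Tg (k : Type) [CommRing k] (n d : ℕ) (j : ℕ) : NCA k n d :=
  if h : 1 ≤ j ∧ j ≤ n then
    RingQuot.mkAlgHom k (NCRel k n d) (FreeAlgebra.ι k ⟨j - 1, by omega⟩) else 1

/-- The descending product `T_{n-1} T_{n-2} ⋯ T_m` in `NC_A(n,d)`. -/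
noncomputable def descT (k : Type) [CommRing k] (n d : ℕ) (m : ℕ) : NCA k n d :=
  ((List.range' m (n - m)).reverse.map (Tg k n d)).prod

/-- The product of generators `T_{j}` along a (1-indexed) word `l`. -/
noncomputable def TwOf (k : Type) [CommRing k] (n d : ℕ) (l : List ℕ) : NCA k n d :=
  (l.map (Tg k n d)).prod

/-- The simple transposition `s_j = (j, j+1)` (1-indexed) in the symmetric group
on `{1, …, n}`, realized as `Equiv.Perm (Fin n)`. -/
def sp (n : ℕ) (j : ℕ) : Equiv.Perm (Fin n) :=
  if h : 1 ≤ j ∧ j < n then Equiv.swap ⟨j - 1, by omega⟩ ⟨j, h.2⟩ else 1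

/-- `l` is a reduced word for `w ∈ S_n` in the simple transpositions `s_1, …, s_{n-1}`. -/
def IsRedWord (n : ℕ) (w : Equiv.Perm (Fin n)) (l : List ℕ) : Prop :=
  (∀ j ∈ l, 1 ≤ j ∧ j < n) ∧ (l.map (sp n)).prod = w ∧
    ∀ l' : List ℕ, (∀ j ∈ l', 1 ≤ j ∧ j < n) → (l'.map (sp n)).prod = w →
      l.length ≤ l'.length

/-- A fixed reduced word for the longest element `w'_∘` of `S_n`:
`(1)(21)(321)⋯(n-1 ⋯ 2 1)`. -/
def longestWord (n : ℕ) : List ℕ :=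
  (List.range n).flatMap fun j => (List.range' 1 j).reverse

/-- The candidate primitive elements `T_{w'_∘} T_n^{k_0+1} T_{n-1} ⋯ T_1` of
`NC_A(n,d)`, for `k_0 : Fin (d-1)`. -/
noncomputable def primFam (k : Type) [CommRing k] (n d : ℕ) (k0 : Fin (d - 1)) :
    NCA k n d :=
  TwOf k n d (longestWord n) * Tg k n d n ^ ((k0 : ℕ) + 1) * descT k n d 1

section Theta
open MulOpposite

variable (k : Type) [CommRing k] (n d : ℕ)

noncomputable def thetaHat : FreeAlgebra k (Fin n) →ₐ[k] (NCA k n d)ᵐᵒᵖ :=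
  FreeAlgebra.lift k fun i => op (RingQuot.mkAlgHom k (NCRel k n d) (FreeAlgebra.ι k i))

lemma thetaHat_rel {a b : FreeAlgebra k (Fin n)} (h : NCRel k n d a b) :
    thetaHat k n d a = thetaHat k n d b := by
  induction h with
  | braid i j h =>
      have := RingQuot.mkAlgHom_rel k (NCRel.braid (k := k) (d := d) i j h)
      simp only [map_mul] at this
      simp only [thetaHat, map_mul, FreeAlgebra.lift_ι_apply, ← op_mul]
      congr 1
      rw [← mul_assoc, ← mul_assoc, this]
  | comm i j h =>
      have := RingQuot.mkAlgHom_rel k (NCRel.comm (k := k) (d := d) i j h)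
      simp only [map_mul] at this
      simp only [thetaHat, map_mul, FreeAlgebra.lift_ι_apply, ← op_mul]
      rw [this]
  | sq i h =>
      have := RingQuot.mkAlgHom_rel k (NCRel.sq (k := k) (d := d) i h)
      simp only [map_pow, map_zero] at this
      simp only [thetaHat, map_pow, map_zero, FreeAlgebra.lift_ι_apply, ← op_pow, this, op_zero]
  | last i h =>
      have := RingQuot.mkAlgHom_rel k (NCRel.last (k := k) (d := d) i h)
      simp only [map_pow, map_zero] at this
      simp only [thetaHat, map_pow, map_zero, FreeAlgebra.lift_ι_apply, ← op_pow, this, op_zero]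

noncomputable def Phi : NCA k n d →ₐ[k] (NCA k n d)ᵐᵒᵖ :=
  RingQuot.liftAlgHom k ⟨thetaHat k n d, fun _ _ h => thetaHat_rel k n d h⟩

noncomputable def thetaFun (x : NCA k n d) : NCA k n d := unop (Phi k n d x)

lemma theta_mul (x y : NCA k n d) :
    thetaFun k n d (x * y) = thetaFun k n d y * thetaFun k n d x := by
  simp [thetaFun, map_mul]

lemma theta_add (x y : NCA k n d) :
    thetaFun k n d (x + y) = thetaFun k n d x + thetaFun k n d y := by
  simp [thetaFun, map_add]

lemma theta_smul (c : k) (x : NCA k n d) :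
    thetaFun k n d (c • x) = c • thetaFun k n d x := by
  simp [thetaFun, map_smul]

lemma theta_one : thetaFun k n d 1 = 1 := by simp [thetaFun, map_one]

lemma theta_mk_ι (i : Fin n) :
    thetaFun k n d (RingQuot.mkAlgHom k (NCRel k n d) (FreeAlgebra.ι k i)) =
      RingQuot.mkAlgHom k (NCRel k n d) (FreeAlgebra.ι k i) := by
  simp [thetaFun, Phi, RingQuot.liftAlgHom_mkAlgHom_apply, thetaHat, FreeAlgebra.lift_ι_apply]

lemma theta_theta (x : NCA k n d) : thetaFun k n d (thetaFun k n d x) = x := by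
  obtain ⟨a, rfl⟩ := RingQuot.mkAlgHom_surjective k (NCRel k n d) x
  induction a using FreeAlgebra.induction with
  | grade0 r =>
      rw [AlgHom.commutes]
      have : (algebraMap k (NCA k n d)) r = r • 1 := by
        rw [Algebra.algebraMap_eq_smul_one]
      rw [this, theta_smul, theta_one, theta_smul, theta_one]
  | grade1 i => rw [theta_mk_ι, theta_mk_ι]
  | mul a b ha hb => rw [map_mul, theta_mul, theta_mul, ha, hb]
  | add a b ha hb => rw [map_add, theta_add, theta_add, ha, hb]

lemma theta_pow (x : NCA k n d) (m : ℕ) :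
    thetaFun k n d (x ^ m) = thetaFun k n d x ^ m := by
  induction m with
  | zero => simp [theta_one]
  | succ m ih => rw [pow_succ, theta_mul, ih, pow_succ']

lemma theta_Tg (j : ℕ) (h1 : 1 ≤ j) (h2 : j ≤ n) :
    thetaFun k n d (Tg k n d j) = Tg k n d j := by
  rw [Tg, dif_pos ⟨h1, h2⟩, theta_mk_ι]

end Theta

section Comb
variable (k : Type) [CommRing k] (n d : ℕ)

lemma TwOf_nil : TwOf k n d [] = 1 := rfl

lemma TwOf_cons (a : ℕ) (l : List ℕ) :
    TwOf k n d (a :: l) = Tg k n d a * TwOf k n d l := by simp [TwOf]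

lemma TwOf_append (l1 l2 : List ℕ) :
    TwOf k n d (l1 ++ l2) = TwOf k n d l1 * TwOf k n d l2 := by
  simp [TwOf]

lemma TwOf_singleton (a : ℕ) : TwOf k n d [a] = Tg k n d a := by simp [TwOf]

lemma Tg_comm_raw (i j : ℕ) (h1 : 1 ≤ i) (h2 : i + 1 < j) (h3 : j ≤ n) :
    Commute (Tg k n d j) (Tg k n d i) := by
  have hi : 1 ≤ i ∧ i ≤ n := ⟨h1, by omega⟩
  have hj : 1 ≤ j ∧ j ≤ n := ⟨by omega, h3⟩
  simp only [Tg, dif_pos hi, dif_pos hj]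
  set i' : Fin n := ⟨i - 1, by omega⟩ with hi'
  set j' : Fin n := ⟨j - 1, by omega⟩ with hj'
  have hcond : (i' : ℕ) + 1 < (j' : ℕ) := by
    rw [hi', hj']; show i - 1 + 1 < j - 1; omega
  have := RingQuot.mkAlgHom_rel k (NCRel.comm (k := k) (d := d) i' j' hcond)
  simp only [map_mul] at this
  exact this.symm

lemma Tg_commute_TwOf (j : ℕ) (l : List ℕ) (hj : j ≤ n)
    (hl : ∀ i ∈ l, 1 ≤ i ∧ i + 1 < j) :
    Commute (Tg k n d j) (TwOf k n d l) := by
  induction l with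
  | nil => rw [TwOf_nil]; exact Commute.one_right _
  | cons a l ih =>
      rw [TwOf_cons]
      exact Commute.mul_right
        (Tg_comm_raw k n d a j (hl a (by simp)).1 (hl a (by simp)).2 hj)
        (ih fun i hi => hl i (by simp [hi]))

lemma longestWord_succ (m : ℕ) :
    longestWord (m + 1) = longestWord m ++ (List.range' 1 m).reverse := by
  simp [longestWord, List.range_succ]

lemma mem_longestWord {m i : ℕ} (h : i ∈ longestWord m) : 1 ≤ i ∧ i + 1 ≤ m := by
  simp only [longestWord, List.mem_flatMap, List.mem_reverse, List.mem_range',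
    List.mem_range] at h
  obtain ⟨j, hj, b, hb, rfl⟩ := h
  omega

lemma mem_range'_one {m i : ℕ} (h : i ∈ List.range' 1 m) : 1 ≤ i ∧ i ≤ m := by
  simp only [List.mem_range'] at h
  obtain ⟨b, hb, rfl⟩ := h
  omega

lemma range'_one_concat (m : ℕ) :
    List.range' 1 (m + 1) = List.range' 1 m ++ [m + 1] := by
  simpa [Nat.add_comm] using List.range'_concat (step := 1) (s := 1) (n := m)

lemma keyE : ∀ m, m ≤ n →
    TwOf k n d (List.range' 1 m) * TwOf k n d (longestWord m)
      = TwOf k n d (longestWord m) * TwOf k n d ((List.range' 1 m).reverse) := by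
  intro m
  induction m with
  | zero => intro _; simp [longestWord, TwOf_nil]
  | succ m ih =>
      intro hm
      have hcomm : Commute (Tg k n d (m + 1)) (TwOf k n d (longestWord m)) :=
        Tg_commute_TwOf k n d (m + 1) (longestWord m) hm
          (fun i hi => ⟨(mem_longestWord hi).1, by have := (mem_longestWord hi).2; omega⟩)
      rw [longestWord_succ, range'_one_concat, List.reverse_append, List.reverse_singleton,
        TwOf_append, TwOf_append, TwOf_append, TwOf_cons]
      simp only [TwOf_nil, mul_one]
      calc TwOf k n d (List.range' 1 m) * Tg k n d (m + 1)
            * (TwOf k n d (longestWord m) * TwOf k n d ((List.range' 1 m).reverse))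
          = TwOf k n d (List.range' 1 m)
              * (Tg k n d (m + 1) * TwOf k n d (longestWord m))
              * TwOf k n d ((List.range' 1 m).reverse) := by
            simp only [mul_assoc]
        _ = TwOf k n d (List.range' 1 m) * TwOf k n d (longestWord m)
              * (Tg k n d (m + 1) * TwOf k n d ((List.range' 1 m).reverse)) := by
            rw [hcomm.eq]
            simp only [mul_assoc]
        _ = TwOf k n d (longestWord m) * TwOf k n d ((List.range' 1 m).reverse)
              * (Tg k n d (m + 1) * TwOf k n d ((List.range' 1 m).reverse)) := by
            rw [ih (by omega)]

lemma revEq : ∀ m, m ≤ n →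
    TwOf k n d ((longestWord m).reverse) = TwOf k n d (longestWord m) := by
  intro m
  induction m with
  | zero => intro _; simp [longestWord]
  | succ m ih =>
      intro hm
      rw [longestWord_succ, List.reverse_append, List.reverse_reverse, TwOf_append,
        TwOf_append, ih (by omega), keyE k n d m (by omega)]

end Comb

section Final
variable (k : Type) [CommRing k] (n d : ℕ)

lemma theta_TwOf (l : List ℕ) (hl : ∀ i ∈ l, 1 ≤ i ∧ i ≤ n) :
    thetaFun k n d (TwOf k n d l) = TwOf k n d l.reverse := by
  induction l with
  | nil => simpa [TwOf_nil] using theta_one k n d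
  | cons a l ih =>
      rw [TwOf_cons, theta_mul, ih (fun i hi => hl i (by simp [hi])), List.reverse_cons,
        TwOf_append, TwOf_singleton, theta_Tg k n d a (hl a (by simp)).1 (hl a (by simp)).2]

noncomputable def thetaLin : NCA k n d ≃ₗ[k] NCA k n d where
  toFun := thetaFun k n d
  map_add' := theta_add k n d
  map_smul' := theta_smul k n d
  invFun := thetaFun k n d
  left_inv := theta_theta k n d
  right_inv := theta_theta k n d

end Final

/-- `NC_A(n,d)` admits a `k`-algebra anti-automorphism `θ` fixing each generator
`T_i`, and `θ` fixes each primitive element `T_{w'_∘} T_n^k T_{n-1} ⋯ T_1`,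
`1 ≤ k ≤ d-1`. -/
theorem NCA_anti_automorphism (k : Type) [CommRing k] (n d : ℕ)
    (hn : 1 ≤ n) (hd : 2 ≤ d) :
    ∃ θ : NCA k n d ≃ₗ[k] NCA k n d,
      θ 1 = 1 ∧ (∀ x y : NCA k n d, θ (x * y) = θ y * θ x) ∧
      (∀ j, 1 ≤ j → j ≤ n → θ (Tg k n d j) = Tg k n d j) ∧
      ∀ k0 : Fin (d - 1), θ (primFam k n d k0) = primFam k n d k0 := by
  refine ⟨thetaLin k n d, theta_one k n d, theta_mul k n d,
    fun j h1 h2 => theta_Tg k n d j h1 h2, fun k0 => ?_⟩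
  obtain ⟨p, rfl⟩ : ∃ p, n = p + 1 := ⟨n - 1, by omega⟩
  set m0 : ℕ := (k0 : ℕ) + 1 with hm0
  have hdesc : descT k (p + 1) d 1 = TwOf k (p + 1) d ((List.range' 1 p).reverse) := by
    simp [descT, TwOf]
  have hlw : ∀ i ∈ longestWord (p + 1), 1 ≤ i ∧ i ≤ p + 1 := by
    intro i hi
    have := mem_longestWord hi
    omega
  have hrev : ∀ i ∈ (List.range' 1 p).reverse, 1 ≤ i ∧ i ≤ p + 1 := by
    intro i hi
    rw [List.mem_reverse] at hi
    have := mem_range'_one hi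
    omega
  show thetaFun k (p + 1) d (primFam k (p + 1) d k0) = primFam k (p + 1) d k0
  rw [primFam, theta_mul, theta_mul, hdesc,
    theta_TwOf k (p + 1) d _ hrev, List.reverse_reverse,
    theta_TwOf k (p + 1) d _ hlw,
    theta_pow, theta_Tg k (p + 1) d (p + 1) (by omega) (by omega),
    revEq k (p + 1) d (p + 1) le_rfl]
  -- goal : B * (t * W') = W' * t * A  where W' = TwOf (longestWord (p+1)) = W * A
  have hcomm : Commute (Tg k (p + 1) d (p + 1) ^ m0) (TwOf k (p + 1) d (longestWord p)) := by
    refine Commute.pow_left ?_ m0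
    refine Tg_commute_TwOf k (p + 1) d (p + 1) (longestWord p) le_rfl ?_
    intro i hi
    have := mem_longestWord hi
    omega
  rw [longestWord_succ, TwOf_append]
  rw [← mul_assoc, ← mul_assoc, mul_assoc (TwOf k (p + 1) d (List.range' 1 p)), ← hm0,
    hcomm.eq, ← mul_assoc, keyE k (p + 1) d p (by omega)]
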